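/- For every c > 0 there exists a constant C > 0 such that for all ε ∈ (0, 1/2], the integral ∫₀^∞ (ε e^{-c r}) / (√r (√r + ε)) dr is at most C ε |log ε|. -/

import Mathlib

open MeasureTheory Real Set Filter

lemma exp_int (c : ℝ) (hc : 0 < c) : ∫ x in Ioi (1:ℝ), Real.exp (-c * x) = Real.exp (-c) / c := by
  have hderiv : ∀ x ∈ Ici (1:ℝ), HasDerivAt (fun x => -Real.exp (-c * x) / c) (Real.exp (-c * x)) x := by
    intro x _
    have h1 : HasDerivAt (fun x : ℝ => -c * x) (-c) x := by
      simpa using (hasDerivAt_id x).const_mul (-c)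
    have h2 := (Real.hasDerivAt_exp (-c * x)).comp x h1
    have h3 := (h2.neg).div_const c
    have h4 : (-(Real.exp (-c * x) * -c) / c) = Real.exp (-c * x) := by
      rw [neg_mul_eq_mul_neg, neg_neg, mul_div_assoc, div_self hc.ne', mul_one]
    rw [h4] at h3
    exact h3
  have hint : IntegrableOn (fun x => Real.exp (-c * x)) (Ioi (1:ℝ)) := by
    simpa using exp_neg_integrableOn_Ioi 1 hc
  have htend : Tendsto (fun x => -Real.exp (-c * x) / c) atTop (nhds 0) := by
    have : Tendsto (fun x : ℝ => -c * x) atTop atBot := by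
      apply Tendsto.const_mul_atTop_of_neg (neg_neg_iff_pos.mpr hc) tendsto_id
    have := (Real.tendsto_exp_atBot.comp this).neg.div_const c
    simpa using this
  have := MeasureTheory.integral_Ioi_of_hasDerivAt_of_tendsto' hderiv hint htend
  rw [this]
  simp [mul_one]
  ring

theorem stmt_0 (c : ℝ) (hc : 0 < c) :
    ∃ C : ℝ, 0 < C ∧ ∀ ε : ℝ, ε ∈ Set.Ioc (0 : ℝ) (1 / 2) →
      (∫ r in Set.Ioi (0 : ℝ),
          ε * Real.exp (-c * r) / (Real.sqrt r * (Real.sqrt r + ε)))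
        ≤ C * ε * |Real.log ε| := by
  have hlog2 : (0:ℝ) < Real.log 2 := Real.log_pos (by norm_num)
  refine ⟨2 / Real.log 2 + 2 + 1 / (c * Real.log 2), by positivity, ?_⟩
  rintro ε ⟨hε0, hε2⟩
  set g : ℝ → ℝ := fun r => ε * Real.exp (-c * r) / (Real.sqrt r * (Real.sqrt r + ε)) with hg
  have hεlt1 : ε < 1 := lt_of_le_of_lt hε2 (by norm_num)
  have ha0 : (0:ℝ) < ε ^ 2 := by positivity
  have ha1 : ε ^ 2 ≤ 1 := by nlinarith
  have hgnn : ∀ r : ℝ, 0 ≤ g r := by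
    intro r
    rcases le_or_gt (Real.sqrt r) 0 with h | h
    · have : Real.sqrt r = 0 := le_antisymm h (Real.sqrt_nonneg r)
      simp [hg, this]
    · apply div_nonneg (by positivity)
      positivity
  have hgmeas : Measurable g := by
    apply Measurable.div
    · exact measurable_const.mul (Real.measurable_exp.comp (measurable_id.const_mul (-c)))
    · exact (Real.continuous_sqrt.measurable).mul ((Real.continuous_sqrt.measurable).add measurable_const)
  -- pointwise bounds
  have hbound1 : ∀ r : ℝ, 0 < r → g r ≤ r ^ (-(1/2) : ℝ) := by
    intro r hr0
    have hs : 0 < Real.sqrt r := Real.sqrt_pos.mpr hr0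
    have hse : 0 < Real.sqrt r + ε := by linarith
    have hnum : ε * Real.exp (-c * r) ≤ Real.sqrt r + ε := by
      have h1 : Real.exp (-c * r) ≤ 1 := Real.exp_le_one_iff.mpr (by nlinarith)
      nlinarith [Real.sqrt_nonneg r]
    have h2 : g r ≤ (Real.sqrt r + ε) / (Real.sqrt r * (Real.sqrt r + ε)) :=
      (div_le_div_iff_of_pos_right (by positivity)).mpr hnum
    have h3 : (Real.sqrt r + ε) / (Real.sqrt r * (Real.sqrt r + ε)) = r ^ (-(1/2) : ℝ) := by
      rw [mul_comm, div_mul_eq_div_div, div_self hse.ne', Real.rpow_neg hr0.le,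
        ← Real.sqrt_eq_rpow, one_div]
    linarith [h2, h3.le, h3.ge]
  have hbound2 : ∀ r ∈ Ioc (ε^2) 1, g r ≤ ε * (1/r) := by
    rintro r ⟨hr1, _⟩
    have hr0 : 0 < r := lt_trans ha0 hr1
    have hs : 0 < Real.sqrt r := Real.sqrt_pos.mpr hr0
    have hnum : ε * Real.exp (-c * r) ≤ ε := by
      have h1 : Real.exp (-c * r) ≤ 1 := Real.exp_le_one_iff.mpr (by nlinarith)
      nlinarith
    have hden : r ≤ Real.sqrt r * (Real.sqrt r + ε) := by
      have := Real.sq_sqrt hr0.le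
      nlinarith
    calc g r ≤ ε / r := div_le_div₀ hε0.le hnum hr0 hden
    _ = ε * (1/r) := by ring
  have hbound3 : ∀ r ∈ Ioi (1:ℝ), g r ≤ ε * Real.exp (-c * r) := by
    intro r hr
    have hr1 : (1:ℝ) ≤ r := le_of_lt hr
    have hs : (1:ℝ) ≤ Real.sqrt r := by
      rw [show (1:ℝ) = Real.sqrt 1 by simp]
      exact Real.sqrt_le_sqrt hr1
    have hden : (1:ℝ) ≤ Real.sqrt r * (Real.sqrt r + ε) := by nlinarith
    calc g r ≤ ε * Real.exp (-c * r) / 1 :=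
          div_le_div₀ (by positivity) le_rfl one_pos hden
    _ = ε * Real.exp (-c * r) := by ring
  -- integrabilities
  have irpow : IntegrableOn (fun r : ℝ => r ^ (-(1/2) : ℝ)) (Ioc (0:ℝ) 1) := by
    have := intervalIntegral.intervalIntegrable_rpow' (a := 0) (b := 1) (r := -(1/2)) (by norm_num)
    exact (intervalIntegrable_iff_integrableOn_Ioc_of_le (by norm_num)).mp this
  have i01 : IntegrableOn g (Ioc (0:ℝ) 1) := by
    apply Integrable.mono' irpow (hgmeas.aestronglyMeasurable.restrict)
    filter_upwards [ae_restrict_mem measurableSet_Ioc] with r hr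
    rw [Real.norm_eq_abs, abs_of_nonneg (hgnn r)]
    exact hbound1 r hr.1
  have i1 : IntegrableOn g (Ioc (0:ℝ) (ε^2)) :=
    i01.mono_set (Ioc_subset_Ioc_right ha1)
  have i2 : IntegrableOn g (Ioc (ε^2) 1) :=
    i01.mono_set (Ioc_subset_Ioc_left ha0.le)
  have iexp : IntegrableOn (fun r : ℝ => ε * Real.exp (-c * r)) (Ioi (1:ℝ)) :=
    (exp_neg_integrableOn_Ioi 1 hc).const_mul ε
  have i3 : IntegrableOn g (Ioi (1:ℝ)) := by
    apply Integrable.mono' iexp (hgmeas.aestronglyMeasurable.restrict)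
    filter_upwards [ae_restrict_mem measurableSet_Ioi] with r hr
    rw [Real.norm_eq_abs, abs_of_nonneg (hgnn r)]
    exact hbound3 r hr
  -- split the integral
  have hU1 : Ioc (ε^2) 1 ∪ Ioi (1:ℝ) = Ioi (ε^2) := Ioc_union_Ioi_eq_Ioi ha1
  have hU2 : Ioc (0:ℝ) (ε^2) ∪ Ioi (ε^2) = Ioi (0:ℝ) := Ioc_union_Ioi_eq_Ioi ha0.le
  have itail : IntegrableOn g (Ioi (ε^2)) := by
    rw [← hU1]; exact i2.union i3
  have hsplit1 : ∫ r in Ioi (ε^2), g r = (∫ r in Ioc (ε^2) 1, g r) + ∫ r in Ioi (1:ℝ), g r := by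
    rw [← hU1]
    exact setIntegral_union (Ioc_disjoint_Ioi le_rfl) measurableSet_Ioi i2 i3
  have hsplit : ∫ r in Ioi (0:ℝ), g r
      = (∫ r in Ioc (0:ℝ) (ε^2), g r) + ((∫ r in Ioc (ε^2) 1, g r) + ∫ r in Ioi (1:ℝ), g r) := by
    rw [← hsplit1, ← hU2]
    exact setIntegral_union (Ioc_disjoint_Ioi le_rfl) measurableSet_Ioi i1 itail
  -- bound each piece
  have hA : ∫ r in Ioc (0:ℝ) (ε^2), g r ≤ 2 * ε := by
    have h1 : ∫ r in Ioc (0:ℝ) (ε^2), g r ≤ ∫ r in Ioc (0:ℝ) (ε^2), r ^ (-(1/2) : ℝ) := by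
      apply setIntegral_mono_on i1 (irpow.mono_set (Ioc_subset_Ioc_right ha1)) measurableSet_Ioc
      intro r hr; exact hbound1 r hr.1
    have h2 : ∫ r in Ioc (0:ℝ) (ε^2), r ^ (-(1/2) : ℝ) = 2 * ε := by
      rw [← intervalIntegral.integral_of_le ha0.le,
        integral_rpow (Or.inl (by norm_num))]
      rw [show (-(1/2) : ℝ) + 1 = 1/2 by norm_num, Real.zero_rpow (by norm_num),
        ← Real.sqrt_eq_rpow, Real.sqrt_sq hε0.le]
      ring
    linarith
  have hB : ∫ r in Ioc (ε^2) 1, g r ≤ ε * (2 * |Real.log ε|) := by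
    have hint : IntegrableOn (fun r : ℝ => ε * (1/r)) (Ioc (ε^2) 1) := by
      have h1 : IntervalIntegrable (fun r : ℝ => 1/r) volume (ε^2) 1 := by
        apply intervalIntegral.intervalIntegrable_one_div
        · intro x hx
          rw [Set.uIcc_of_le ha1] at hx
          exact ne_of_gt (lt_of_lt_of_le ha0 hx.1)
        · exact continuousOn_id
      exact ((intervalIntegrable_iff_integrableOn_Ioc_of_le ha1).mp h1).const_mul ε
    have h1 : ∫ r in Ioc (ε^2) 1, g r ≤ ∫ r in Ioc (ε^2) 1, ε * (1/r) :=
      setIntegral_mono_on i2 hint measurableSet_Ioc hbound2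
    have h2 : ∫ r in Ioc (ε^2) 1, ε * (1/r) = ε * (2 * |Real.log ε|) := by
      rw [MeasureTheory.integral_const_mul, ← intervalIntegral.integral_of_le ha1,
        integral_one_div (by rw [Set.uIcc_of_le ha1]; intro h; exact absurd h.1 (not_le.mpr ha0))]
      have hlogneg : Real.log ε < 0 := Real.log_neg hε0 hεlt1
      rw [abs_of_neg hlogneg]
      rw [show (1:ℝ) / ε^2 = (ε^2)⁻¹ by ring, Real.log_inv, Real.log_pow]
      push_cast; ring
    linarith
  have hC : ∫ r in Ioi (1:ℝ), g r ≤ ε * (Real.exp (-c) / c) := by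
    have h1 : ∫ r in Ioi (1:ℝ), g r ≤ ∫ r in Ioi (1:ℝ), ε * Real.exp (-c * r) :=
      setIntegral_mono_on i3 iexp measurableSet_Ioi hbound3
    have h2 : ∫ r in Ioi (1:ℝ), ε * Real.exp (-c * r) = ε * (Real.exp (-c) / c) := by
      rw [MeasureTheory.integral_const_mul, exp_int c hc]
    linarith
  -- finish
  have hL : Real.log 2 ≤ |Real.log ε| := by
    have h1 : Real.log ε ≤ Real.log (1/2) := Real.log_le_log hε0 hε2
    have h2 : Real.log (1/2) = -Real.log 2 := by
      rw [one_div, Real.log_inv]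
    have hlogneg : Real.log ε < 0 := Real.log_neg hε0 hεlt1
    rw [abs_of_neg hlogneg]; linarith
  have hexp : Real.exp (-c) ≤ 1 := Real.exp_le_one_iff.mpr (by linarith)
  have hLpos : 0 < |Real.log ε| := lt_of_lt_of_le hlog2 hL
  rw [hsplit]
  have k1 : 2 * ε ≤ (2 / Real.log 2) * ε * |Real.log ε| := by
    rw [div_mul_eq_mul_div, div_mul_eq_mul_div, le_div_iff₀ hlog2]
    nlinarith
  have k2 : ε * (Real.exp (-c) / c) ≤ (1 / (c * Real.log 2)) * ε * |Real.log ε| := by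
    rw [div_mul_eq_mul_div, div_mul_eq_mul_div, le_div_iff₀ (by positivity)]
    have heq : ε * (Real.exp (-c) / c) * (c * Real.log 2) = ε * (Real.exp (-c) * Real.log 2) := by
      field_simp
    rw [heq]
    have h6 : Real.exp (-c) * Real.log 2 ≤ |Real.log ε| := by
      nlinarith [mul_le_mul_of_nonneg_right hexp hlog2.le]
    nlinarith [mul_le_mul_of_nonneg_left h6 hε0.le]
  have expand : (2 / Real.log 2 + 2 + 1 / (c * Real.log 2)) * ε * |Real.log ε|
      = (2 / Real.log 2) * ε * |Real.log ε| + 2 * ε * |Real.log ε|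
        + (1 / (c * Real.log 2)) * ε * |Real.log ε| := by ring
  rw [expand]
  have hB' : ∫ r in Ioc (ε^2) 1, g r ≤ 2 * ε * |Real.log ε| := by linarith [hB]
  linarith [hA, hB', hC, k1, k2]
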